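/- arXiv:1806.06292 — 2 statements merged into one kernel-verified Lean document; each statement's English description precedes it below -/
import Mathlib

section
/- Let K : 𝔻² → ℝ and h : 𝕊¹ → ℝ be continuous. The set 𝕏 = {u ∈ H¹(𝔻²) : ∫_{𝔻²} K e^u > 0 and ∫_{𝕊¹} h e^{u/2} > 0} is nonempty if and only if K is positive at some point of 𝔻² and h is positive at some point of 𝕊¹. -/
open MeasureTheory Metric Filter Set
open scoped Real NNReal Topology

noncomputable section

/-- The closed unit disk `𝔻² ⊆ ℝ²`, identified with a subset of `ℂ`. -/
def Disk : Set ℂ := Metric.closedBall 0 1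

/-- The unit circle `𝕊¹ = ∂𝔻²`. -/
def Circ : Set ℂ := Metric.sphere 0 1

/-- Arc-length measure on curves in `ℝ² ≅ ℂ`: the 1-dimensional Hausdorff measure. -/
def arcLength : Measure ℂ := μH[1]

/-- The Euclidean Laplacian of `u : ℂ → ℝ`: the sum of the second derivatives in the two
orthonormal directions `1` and `I`. -/
def laplacian (u : ℂ → ℝ) (x : ℂ) : ℝ :=
  fderiv ℝ (fun y => fderiv ℝ u y 1) x 1 +
    fderiv ℝ (fun y => fderiv ℝ u y Complex.I) x Complex.I

/-- `u` is a (classical) solution of `−Δu = 2 K e^u` in `𝔻²`,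
`∂u/∂η + 2 = 2 h e^{u/2}` on `𝕊¹` (the outward unit normal at `x ∈ 𝕊¹` is `x` itself;
`u` is taken to be `C²`, extended to the plane). -/
def SolvesPrescribed (K h u : ℂ → ℝ) : Prop :=
  ContDiff ℝ 2 u ∧
  (∀ x ∈ Disk, -laplacian u x = 2 * K x * Real.exp (u x)) ∧
  (∀ x ∈ Circ, fderiv ℝ u x x + 2 = 2 * h x * Real.exp (u x / 2))

open scoped ENNReal

lemma measurableSet_Disk : MeasurableSet Disk := measurableSet_closedBall
lemma measurableSet_Circ : MeasurableSet Circ := (isClosed_sphere).measurableSet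
lemma isCompact_Disk : IsCompact Disk := isCompact_closedBall _ _
lemma isCompact_Circ : IsCompact Circ := isCompact_sphere _ _

lemma circ_subset_image : Circ ⊆ circleMap 0 1 '' Set.Icc (-π) π := by
  intro z hz
  have habs : ‖z‖ = 1 := by
    simpa [Complex.dist_eq] using (mem_sphere_iff_norm.mp hz)
  refine ⟨Complex.arg z, ?_, ?_⟩
  · exact Set.Ioc_subset_Icc_self (Complex.arg_mem_Ioc z)
  · have := Complex.norm_mul_exp_arg_mul_I z
    simpa [circleMap, habs] using this

lemma arcLength_circ_lt_top : arcLength Circ < ⊤ := by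
  have h1 : arcLength Circ ≤ μH[1] (circleMap 0 1 '' Set.Icc (-π) π) :=
    measure_mono circ_subset_image
  have h2 := (lipschitzWith_circleMap 0 1).hausdorffMeasure_image_le
    (zero_le_one) (Set.Icc (-π) π)
  have h3 : (μH[1] : Measure ℝ) (Set.Icc (-π) π) = ENNReal.ofReal (π - (-π)) := by
    rw [MeasureTheory.hausdorffMeasure_real, Real.volume_Icc]
  refine lt_of_le_of_lt (h1.trans h2) ?_
  rw [h3]
  exact ENNReal.mul_lt_top (by simp) ENNReal.ofReal_lt_top

lemma arc_ball_pos (y : ℂ) (hy : y ∈ Circ) {r : ℝ} (hr : 0 < r) :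
    0 < arcLength (Circ ∩ Metric.closedBall y r) := by
  have habsy : ‖y‖ = 1 := by
    simpa [Complex.dist_eq] using (mem_sphere_iff_norm.mp hy)
  set s : ℝ := min (r/2) (1/2) with hs
  have hs0 : 0 < s := lt_min (by linarith) (by norm_num)
  have hs12 : s ≤ 1/2 := min_le_right _ _
  have hsr : s ≤ r/2 := min_le_left _ _
  set f : ℂ → ℝ := fun z => (z * (starRingEnd ℂ) y).im with hf
  have hlip : LipschitzWith 1 f := by
    refine LipschitzWith.of_dist_le_mul fun z w => ?_
    have : f z - f w = ((z - w) * (starRingEnd ℂ) y).im := by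
      simp [hf, sub_mul]
    rw [Real.dist_eq, this]
    calc |((z - w) * (starRingEnd ℂ) y).im| ≤ ‖(z - w) * (starRingEnd ℂ) y‖ :=
          Complex.abs_im_le_norm _
      _ = ‖z - w‖ * 1 := by rw [norm_mul, Complex.norm_conj, habsy]
      _ = 1 * dist z w := by rw [Complex.dist_eq]; ring
  have himg : Set.Icc (-s) s ⊆ f '' (Circ ∩ Metric.closedBall y r) := by
    rintro t ⟨ht1, ht2⟩
    have ht : |t| ≤ s := abs_le.mpr ⟨ht1, ht2⟩
    have ht2' : t^2 ≤ s^2 := by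
      have := sq_abs t; nlinarith [abs_nonneg t]
    have h01 : (0:ℝ) ≤ 1 - t^2 := by nlinarith
    have hsq : Real.sqrt (1 - t^2) ^ 2 = 1 - t^2 := Real.sq_sqrt h01
    have hsqrt_nonneg := Real.sqrt_nonneg (1 - t^2)
    have hsqrt_le_one : Real.sqrt (1 - t^2) ≤ 1 := by nlinarith
    have hge : 1 - t^2 ≤ Real.sqrt (1 - t^2) := by nlinarith
    set w : ℂ := y * ((Real.sqrt (1 - t^2) : ℝ) + (t : ℝ) * Complex.I) with hw
    have habsv : ‖((Real.sqrt (1 - t^2) : ℝ) : ℂ) + (t : ℝ) * Complex.I‖ = 1 := by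
      rw [Complex.norm_def, Complex.normSq_add_mul_I]
      rw [hsq]; simp
    refine ⟨w, ⟨?_, ?_⟩, ?_⟩
    · have : ‖w‖ = 1 := by rw [hw, norm_mul, habsy, habsv]; ring
      simpa [Circ, Complex.dist_eq] using this
    · have hdiff : w - y = y * (((Real.sqrt (1 - t^2) - 1 : ℝ) : ℂ) + (t : ℝ) * Complex.I) := by
        rw [hw]; push_cast; ring
      have habsd : ‖w - y‖
          = Real.sqrt ((Real.sqrt (1 - t^2) - 1)^2 + t^2) := by
        rw [hdiff, norm_mul, habsy, one_mul, Complex.norm_def, Complex.normSq_add_mul_I]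
      have hle : (Real.sqrt (1 - t^2) - 1)^2 + t^2 ≤ r^2 := by nlinarith
      have : ‖w - y‖ ≤ r := by
        rw [habsd]
        calc Real.sqrt ((Real.sqrt (1 - t^2) - 1)^2 + t^2) ≤ Real.sqrt (r^2) :=
              Real.sqrt_le_sqrt hle
          _ = r := Real.sqrt_sq hr.le
      simpa [Metric.mem_closedBall, Complex.dist_eq] using this
    · have hyc : y * (starRingEnd ℂ) y = 1 := by
        rw [Complex.mul_conj]
        norm_cast
        rw [← Complex.sq_norm, habsy]; norm_num
      have : w * (starRingEnd ℂ) y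
          = ((Real.sqrt (1 - t^2) : ℝ) : ℂ) + (t : ℝ) * Complex.I := by
        rw [hw]
        calc y * (((Real.sqrt (1 - t^2) : ℝ) : ℂ) + (t:ℝ) * Complex.I) * (starRingEnd ℂ) y
            = (y * (starRingEnd ℂ) y) * (((Real.sqrt (1 - t^2) : ℝ):ℂ) + (t:ℝ) * Complex.I) := by
              ring
          _ = _ := by rw [hyc, one_mul]
      show (w * (starRingEnd ℂ) y).im = t
      rw [this]
      simp
  have key : (ENNReal.ofReal (s - (-s))) ≤ arcLength (Circ ∩ Metric.closedBall y r) := by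
    calc ENNReal.ofReal (s - (-s)) = (μH[1] : Measure ℝ) (Set.Icc (-s) s) := by
          rw [MeasureTheory.hausdorffMeasure_real, Real.volume_Icc]
      _ ≤ (μH[1] : Measure ℝ) (f '' (Circ ∩ Metric.closedBall y r)) := measure_mono himg
      _ ≤ ((1:ℝ≥0) : ℝ≥0∞) ^ (1:ℝ) * μH[1] (Circ ∩ Metric.closedBall y r) :=
          hlip.hausdorffMeasure_image_le zero_le_one _
      _ = arcLength (Circ ∩ Metric.closedBall y r) := by simp [arcLength]
  refine lt_of_lt_of_le ?_ key
  rw [ENNReal.ofReal_pos]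
  linarith

set_option maxHeartbeats 1000000 in
/-- **Lemma 2.1.** The set `𝕏 = {u ∈ H¹(𝔻²) : ∫_{𝔻²} K e^u > 0, ∫_{𝕊¹} h e^{u/2} > 0}`
is nonempty if and only if `K` is positive somewhere on `𝔻²` and `h` is positive somewhere
on `𝕊¹`. -/
theorem memX_nonempty_iff
    (K h : ℂ → ℝ) (hK : ContinuousOn K Disk) (hh : ContinuousOn h Circ) :
    (∃ u : ℂ → ℝ, ContDiff ℝ 1 u ∧
        0 < ∫ x in Disk, K x * Real.exp (u x) ∧
        0 < ∫ x in Circ, h x * Real.exp (u x / 2) ∂arcLength) ↔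
      ((∃ x ∈ Disk, 0 < K x) ∧ (∃ x ∈ Circ, 0 < h x)) := by
  constructor
  · rintro ⟨u, -, hD, hC⟩
    constructor
    · by_contra hcon; push_neg at hcon
      have : ∫ x in Disk, K x * Real.exp (u x) ≤ 0 := by
        refine setIntegral_nonpos measurableSet_Disk fun x hx => ?_
        have := Real.exp_pos (u x)
        nlinarith [hcon x hx]
      linarith
    · by_contra hcon; push_neg at hcon
      have : ∫ x in Circ, h x * Real.exp (u x / 2) ∂arcLength ≤ 0 := by
        refine setIntegral_nonpos measurableSet_Circ fun x hx => ?_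
        have := Real.exp_pos (u x / 2)
        nlinarith [hcon x hx]
      linarith
  · rintro ⟨⟨x₀, hx₀, hKx₀⟩, y₀, hy₀, hhy₀⟩
    obtain ⟨δ, hδ0, hδ⟩ := Metric.mem_nhdsWithin_iff.mp
      ((hK x₀ hx₀).eventually (eventually_gt_nhds hKx₀))
    have hx₀n : ‖x₀‖ ≤ 1 := by simpa [Disk] using hx₀
    set c : ℝ := min (δ/2) (1/2) with hc
    have hc0 : 0 < c := lt_min (by linarith) (by norm_num)
    have hc12 : c ≤ 1/2 := min_le_right _ _
    have hcδ : c ≤ δ/2 := min_le_left _ _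
    set x₁ : ℂ := (1 - c : ℝ) • x₀ with hx₁def
    have hx₁n : ‖x₁‖ ≤ 1 - c := by
      rw [hx₁def, norm_smul, Real.norm_eq_abs, abs_of_nonneg (by linarith : (0:ℝ) ≤ 1 - c)]
      have := mul_le_mul_of_nonneg_left hx₀n (by linarith : (0:ℝ) ≤ 1 - c)
      linarith
    have hx₁lt : ‖x₁‖ < 1 := lt_of_le_of_lt hx₁n (by linarith)
    have hx₁Disk : x₁ ∈ Disk := by
      simp only [Disk, Metric.mem_closedBall, Complex.dist_eq, sub_zero]
      calc ‖x₁‖ = ‖x₁‖ := rfl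
        _ ≤ 1 := hx₁lt.le
    have hdist₁ : dist x₁ x₀ < δ := by
      have hsub : x₁ - x₀ = (-c : ℝ) • x₀ := by rw [hx₁def]; module
      rw [dist_eq_norm, hsub, norm_smul, Real.norm_eq_abs, abs_neg,
        abs_of_nonneg hc0.le]
      have := mul_le_mul_of_nonneg_left hx₀n hc0.le
      linarith
    have hKx₁ : 0 < K x₁ := hδ ⟨Metric.mem_ball.mpr hdist₁, hx₁Disk⟩
    obtain ⟨δ₁, hδ₁0, hδ₁⟩ := Metric.mem_nhdsWithin_iff.mp
      ((hK x₁ hx₁Disk).eventually (eventually_gt_nhds (half_lt_self hKx₁)))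
    set ρ₁ : ℝ := min (δ₁/2) ((1 - ‖x₁‖)/2) with hρ₁def
    have hρ₁0 : 0 < ρ₁ := lt_min (by linarith) (by linarith)
    have hρ₁δ : ρ₁ ≤ δ₁/2 := min_le_left _ _
    have hρ₁n : ρ₁ ≤ (1 - ‖x₁‖)/2 := min_le_right _ _
    have hball₁ : Metric.closedBall x₁ ρ₁ ⊆ Disk := by
      intro z hz
      simp only [Disk, Metric.mem_closedBall, Complex.dist_eq, sub_zero]
      have h1 : ‖z - x₁‖ ≤ ρ₁ := by
        simpa [dist_eq_norm] using (Metric.mem_closedBall.mp hz)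
      calc ‖z‖ = ‖z‖ := rfl
        _ ≤ ‖z - x₁‖ + ‖x₁‖ := by simpa using norm_add_le (z - x₁) x₁
        _ ≤ 1 := by linarith
    have hball₁' : ∀ z ∈ Metric.closedBall x₁ ρ₁, z ∉ Circ := by
      intro z hz hzc
      have h1 : ‖z - x₁‖ ≤ ρ₁ := by
        simpa [dist_eq_norm] using (Metric.mem_closedBall.mp hz)
      have h2 : ‖z‖ = 1 := by simpa [Circ, Complex.dist_eq] using hzc
      have : ‖z‖ ≤ ‖z - x₁‖ + ‖x₁‖ := by simpa using norm_add_le (z - x₁) x₁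
      linarith
    have hKρ₁ : ∀ z ∈ Metric.closedBall x₁ ρ₁, K x₁ / 2 ≤ K z := by
      intro z hz
      refine (hδ₁ ⟨Metric.mem_ball.mpr ?_, hball₁ hz⟩).le
      have := Metric.mem_closedBall.mp hz
      linarith
    obtain ⟨δ₂, hδ₂0, hδ₂⟩ := Metric.mem_nhdsWithin_iff.mp
      ((hh y₀ hy₀).eventually (eventually_gt_nhds (half_lt_self hhy₀)))
    set ρ₂ : ℝ := δ₂/2 with hρ₂def
    have hρ₂0 : 0 < ρ₂ := by rw [hρ₂def]; linarith
    have hhρ₂ : ∀ z ∈ Circ, dist z y₀ < ρ₂ → h y₀ / 2 ≤ h z := by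
      intro z hz hd
      refine (hδ₂ ⟨Metric.mem_ball.mpr ?_, hz⟩).le
      rw [hρ₂def] at hd; linarith
    -- bump functions
    set χ₁ : ContDiffBump x₁ := ⟨ρ₁/2, ρ₁, by linarith, by linarith⟩ with hχ₁def
    set χ₂ : ContDiffBump y₀ := ⟨ρ₂/2, ρ₂, by linarith, by linarith⟩ with hχ₂def
    -- bounds
    obtain ⟨M₁, hM₁⟩ := isCompact_Disk.exists_bound_of_continuousOn hK
    obtain ⟨M₂, hM₂⟩ := isCompact_Circ.exists_bound_of_continuousOn hh
    set M₁' : ℝ := max M₁ 0 with hM₁'def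
    set M₂' : ℝ := max M₂ 0 with hM₂'def
    have hM₁' : ∀ z ∈ Disk, |K z| ≤ M₁' := fun z hz =>
      le_trans (by simpa [Real.norm_eq_abs] using hM₁ z hz) (le_max_left _ _)
    have hM₂' : ∀ z ∈ Circ, |h z| ≤ M₂' := fun z hz =>
      le_trans (by simpa [Real.norm_eq_abs] using hM₂ z hz) (le_max_left _ _)
    have hM₁'0 : 0 ≤ M₁' := le_max_right _ _
    have hM₂'0 : 0 ≤ M₂' := le_max_right _ _
    -- measures
    have hVfin : volume Disk < ⊤ := isCompact_Disk.measure_lt_top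
    set V : ℝ := (volume Disk).toReal with hVdef
    have hV0 : 0 ≤ V := ENNReal.toReal_nonneg
    set m₁ : ℝ := (volume (Metric.closedBall x₁ (ρ₁/2))).toReal with hm₁def
    have hm₁ : 0 < m₁ := ENNReal.toReal_pos
      (measure_closedBall_pos _ _ (by linarith)).ne' measure_closedBall_lt_top.ne
    have hCircFin : arcLength Circ < ⊤ := arcLength_circ_lt_top
    set L : ℝ := (arcLength Circ).toReal with hLdef
    have hL0 : 0 ≤ L := ENNReal.toReal_nonneg
    set m₂ : ℝ := (arcLength (Circ ∩ Metric.closedBall y₀ (ρ₂/2))).toReal with hm₂def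
    have hm₂ : 0 < m₂ := ENNReal.toReal_pos
      (arc_ball_pos y₀ hy₀ (by linarith)).ne'
      ((measure_mono Set.inter_subset_left).trans_lt hCircFin).ne
    -- parameters
    have hML0 : 0 ≤ M₂' * L := mul_nonneg hM₂'0 hL0
    set ε : ℝ := min 1 ((h y₀ / 2 * m₂) / (2 * (M₂' * L + 1))) with hεdef
    have hεnum : 0 < h y₀ / 2 * m₂ := mul_pos (by linarith) hm₂
    have hεden : 0 < 2 * (M₂' * L + 1) := by linarith
    have hε0 : 0 < ε := lt_min one_pos (div_pos hεnum hεden)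
    have hε1 : ε ≤ 1 := min_le_left _ _
    have hεkey : ε * (M₂' * L) < h y₀ / 2 * m₂ := by
      have h1 : ε ≤ (h y₀ / 2 * m₂) / (2 * (M₂' * L + 1)) := min_le_right _ _
      have h2 : ε * (2 * (M₂' * L + 1)) ≤ h y₀ / 2 * m₂ := by
        rw [← div_mul_cancel₀ (h y₀ / 2 * m₂) hεden.ne']
        exact mul_le_mul_of_nonneg_right h1 hεden.le
      have h3 : 0 ≤ ε * (M₂' * L) := mul_nonneg hε0.le hML0
      have h4 : ε * (2 * (M₂' * L + 1)) = 2 * (ε * (M₂' * L)) + 2 * ε := by ring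
      linarith
    have hKm₁ : 0 < K x₁ / 2 * m₁ := mul_pos (by linarith) hm₁
    set q : ℝ := (M₁' * (ε+1)^2 * V) / (K x₁ / 2 * m₁) with hqdef
    have hq0 : 0 ≤ q := by
      rw [hqdef]
      exact div_nonneg (mul_nonneg (mul_nonneg hM₁'0 (sq_nonneg _)) hV0) hKm₁.le
    set A : ℝ := Real.sqrt q + 1 with hAdef
    have hsqrt0 : 0 ≤ Real.sqrt q := Real.sqrt_nonneg q
    have hA1 : 1 ≤ A := by rw [hAdef]; linarith
    have hA0 : 0 ≤ A := by linarith
    have hAq : q < A^2 := by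
      have h1 : A^2 = q + 2 * Real.sqrt q + 1 := by
        rw [hAdef, add_sq, Real.sq_sqrt hq0]; ring
      linarith
    have hAkey : M₁' * (ε+1)^2 * V < A^2 * (K x₁ / 2 * m₁) := by
      rw [hqdef] at hAq
      have := (div_lt_iff₀ hKm₁).mp hAq
      linarith
    -- the test function
    set g : ℂ → ℝ := fun z => ε + A * χ₁ z + χ₂ z with hgdef
    have hgpos : ∀ z, 0 < g z := by
      intro z
      have h1 : 0 ≤ A * χ₁ z := mul_nonneg hA0 χ₁.nonneg
      have h2 := χ₂.nonneg (x := z)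
      rw [hgdef]
      dsimp only
      linarith
    have hgC : ContDiff ℝ 1 g := by
      rw [hgdef]
      exact (contDiff_const.add (contDiff_const.mul χ₁.contDiff)).add χ₂.contDiff
    have hgcont : Continuous g := hgC.continuous
    have hgub : ∀ z, g z ≤ ε + A + 1 := by
      intro z
      have h1 : A * χ₁ z ≤ A * 1 := mul_le_mul_of_nonneg_left χ₁.le_one hA0
      have h2 := χ₂.le_one (x := z)
      rw [hgdef]
      dsimp only
      linarith
    have hχ₁Circ : ∀ z ∈ Circ, χ₁ z = 0 := by
      intro z hz
      by_contra hne
      have hmem : z ∈ Function.support ⇑χ₁ := hne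
      rw [χ₁.support_eq] at hmem
      exact hball₁' z (Metric.ball_subset_closedBall hmem) hz
    refine ⟨fun z => 2 * Real.log (g z), ?_, ?_, ?_⟩
    · exact contDiff_const.mul (hgC.log fun z => (hgpos z).ne')
    · -- disk integral
      have hexp : ∀ z : ℂ, Real.exp (2 * Real.log (g z)) = g z ^ 2 := by
        intro z
        rw [show (2:ℝ) * Real.log (g z) = Real.log (g z) + Real.log (g z) by ring,
          Real.exp_add, Real.exp_log (hgpos z)]
        ring
      simp only [hexp]
      set φ : ℂ → ℝ := fun z =>
        (Metric.closedBall x₁ (ρ₁/2)).indicator (fun _ => A^2 * (K x₁ / 2)) z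
          + (-(M₁' * (ε+1)^2)) with hφdef
      have hind_int : IntegrableOn
          ((Metric.closedBall x₁ (ρ₁/2)).indicator (fun _ => A^2 * (K x₁ / 2))) Disk volume :=
        (integrableOn_const hVfin.ne).indicator measurableSet_closedBall
      have hconst_int : IntegrableOn (fun _ : ℂ => -(M₁' * (ε+1)^2)) Disk volume :=
        integrableOn_const hVfin.ne
      have hφ_int : IntegrableOn φ Disk volume := hind_int.add hconst_int
      have hfD_int : IntegrableOn (fun z => K z * g z ^ 2) Disk volume :=
        (hK.mul ((hgcont.pow 2).continuousOn)).integrableOn_compact isCompact_Disk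
      have hM₁ε : 0 ≤ M₁' * (ε+1)^2 := mul_nonneg hM₁'0 (sq_nonneg _)
      have hφ_le : ∀ z ∈ Disk, φ z ≤ K z * g z ^ 2 := by
        intro z hz
        rw [hφdef]
        dsimp only
        by_cases hz1 : z ∈ Metric.closedBall x₁ (ρ₁/2)
        · rw [Set.indicator_of_mem hz1]
          have hone : χ₁ z = 1 := χ₁.one_of_mem_closedBall hz1
          have hKz : K x₁ / 2 ≤ K z := hKρ₁ z
            (Metric.closedBall_subset_closedBall (by linarith) hz1)
          have hA_le_g : A ≤ g z := by
            have h2 := χ₂.nonneg (x := z)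
            rw [hgdef]; dsimp only; rw [hone]
            linarith
          have hg2 : A^2 ≤ g z ^ 2 := pow_le_pow_left₀ hA0 hA_le_g 2
          have h1 : A^2 * (K x₁ / 2) ≤ g z ^ 2 * K z :=
            mul_le_mul hg2 hKz (by linarith) (sq_nonneg _)
          linarith
        · rw [Set.indicator_of_notMem hz1]
          by_cases hz2 : χ₁ z = 0
          · have hgle : g z ≤ ε + 1 := by
              have h2 := χ₂.le_one (x := z)
              rw [hgdef]; dsimp only; rw [hz2]
              linarith
            have hg2 : g z ^ 2 ≤ (ε+1)^2 := pow_le_pow_left₀ (hgpos z).le hgle 2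
            have habs := hM₁' z hz
            have s1 : -M₁' * g z ^ 2 ≤ K z * g z ^ 2 :=
              mul_le_mul_of_nonneg_right (by linarith [neg_abs_le (K z)]) (sq_nonneg _)
            have s2 : M₁' * g z ^ 2 ≤ M₁' * (ε+1)^2 :=
              mul_le_mul_of_nonneg_left hg2 hM₁'0
            linarith
          · have hzsupp : z ∈ Metric.ball x₁ ρ₁ := by
              rw [← χ₁.support_eq]; exact hz2
            have hKz : 0 < K z := by
              have := hKρ₁ z (Metric.ball_subset_closedBall hzsupp)
              linarith
            have h0 : 0 ≤ K z * g z ^ 2 := mul_nonneg hKz.le (sq_nonneg _)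
            linarith
      have hcb_sub : Metric.closedBall x₁ (ρ₁/2) ⊆ Disk :=
        (Metric.closedBall_subset_closedBall (by linarith)).trans hball₁
      have hIφ : ∫ z in Disk, φ z = A^2 * (K x₁ / 2) * m₁ - M₁' * (ε+1)^2 * V := by
        rw [hφdef]
        rw [integral_add hind_int hconst_int]
        rw [setIntegral_indicator measurableSet_closedBall]
        rw [Set.inter_eq_self_of_subset_right hcb_sub]
        rw [setIntegral_const, setIntegral_const]
        rw [smul_eq_mul, smul_eq_mul, hm₁def, hVdef]
        simp only [measureReal_def]
        ring
      have hmono := setIntegral_mono_on hφ_int hfD_int measurableSet_Disk hφ_le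
      rw [hIφ] at hmono
      have hfin : 0 < A^2 * (K x₁ / 2) * m₁ - M₁' * (ε+1)^2 * V := by
        have : A^2 * (K x₁ / 2 * m₁) = A^2 * (K x₁ / 2) * m₁ := by ring
        linarith [hAkey]
      linarith
    · -- circle integral
      have hexp2 : ∀ z : ℂ, Real.exp (2 * Real.log (g z) / 2) = g z := by
        intro z
        rw [show (2:ℝ) * Real.log (g z) / 2 = Real.log (g z) by ring,
          Real.exp_log (hgpos z)]
      simp only [hexp2]
      set ψ : ℂ → ℝ := fun z =>
        (Metric.closedBall y₀ (ρ₂/2)).indicator (fun _ => h y₀ / 2) z + (-(ε * M₂')) with hψdef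
      have hind_int : IntegrableOn
          ((Metric.closedBall y₀ (ρ₂/2)).indicator (fun _ => h y₀ / 2)) Circ arcLength :=
        (integrableOn_const hCircFin.ne).indicator measurableSet_closedBall
      have hconst_int : IntegrableOn (fun _ : ℂ => -(ε * M₂')) Circ arcLength :=
        integrableOn_const hCircFin.ne
      have hψ_int : IntegrableOn ψ Circ arcLength := hind_int.add hconst_int
      have hεM : 0 ≤ ε * M₂' := mul_nonneg hε0.le hM₂'0
      have hfC_int : IntegrableOn (fun z => h z * g z) Circ arcLength := by
        refine Integrable.mono' (g := fun _ => M₂' * (ε + A + 1))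
          (integrableOn_const hCircFin.ne)
          ((hh.aestronglyMeasurable measurableSet_Circ).mul
            hgcont.aestronglyMeasurable.restrict) ?_
        rw [ae_restrict_iff' measurableSet_Circ]
        refine ae_of_all _ fun z hz => ?_
        have h1 : |h z| ≤ M₂' := hM₂' z hz
        have h2 : |g z| = g z := abs_of_pos (hgpos z)
        rw [Real.norm_eq_abs, abs_mul, h2]
        exact mul_le_mul h1 (hgub z) (hgpos z).le hM₂'0
      have hψ_le : ∀ z ∈ Circ, ψ z ≤ h z * g z := by
        intro z hz
        have hgz : g z = ε + χ₂ z := by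
          rw [hgdef]; dsimp only; rw [hχ₁Circ z hz]; ring
        rw [hψdef]
        dsimp only
        by_cases hz1 : z ∈ Metric.closedBall y₀ (ρ₂/2)
        · rw [Set.indicator_of_mem hz1]
          have hone : χ₂ z = 1 := χ₂.one_of_mem_closedBall hz1
          have hhz : h y₀ / 2 ≤ h z := by
            refine hhρ₂ z hz ?_
            have := Metric.mem_closedBall.mp hz1
            linarith
          have hhz0 : 0 ≤ h z := by linarith
          have hprod : 0 ≤ h z * ε := mul_nonneg hhz0 hε0.le
          rw [hgz, hone]
          have hexpand : h z * (ε + 1) = h z * ε + h z := by ring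
          linarith
        · rw [Set.indicator_of_notMem hz1]
          by_cases hz2 : χ₂ z = 0
          · rw [hgz, hz2, add_zero]
            have h1 := hM₂' z hz
            have h2 := neg_abs_le (h z)
            have := mul_le_mul_of_nonneg_right (show -M₂' ≤ h z by linarith) hε0.le
            linarith
          · have hzsupp : z ∈ Metric.ball y₀ ρ₂ := by
              rw [← χ₂.support_eq]; exact hz2
            have hhz : 0 < h z := by
              have := hhρ₂ z hz (Metric.mem_ball.mp hzsupp)
              linarith
            have h0 : 0 ≤ h z * g z := mul_nonneg hhz.le (hgpos z).le
            linarith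
      have hIψ : ∫ z in Circ, ψ z ∂arcLength = h y₀ / 2 * m₂ - ε * M₂' * L := by
        rw [hψdef]
        rw [integral_add hind_int hconst_int]
        rw [setIntegral_indicator measurableSet_closedBall]
        rw [setIntegral_const, setIntegral_const]
        rw [smul_eq_mul, smul_eq_mul, hm₂def, hLdef]
        simp only [measureReal_def]
        ring
      have hmono := setIntegral_mono_on hψ_int hfC_int measurableSet_Circ hψ_le
      rw [hIψ] at hmono
      have hfin : 0 < h y₀ / 2 * m₂ - ε * M₂' * L := by
        have : ε * (M₂' * L) = ε * M₂' * L := by ring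
        linarith [hεkey]
      linarith
end
end

section
/- Let K : 𝔻² → ℝ and h : 𝕊¹ → ℝ be continuous. A function u solves −Δu = 2K e^u in 𝔻², ∂u/∂η + 2 = 2h e^{u/2} on 𝕊¹ if and only if, setting ρ = ∫_{𝔻²} K e^u, the pair (u, ρ) solves the system: −Δu = 2ρ K e^u / ∫_{𝔻²} K e^u in 𝔻², ∂u/∂η + 2 = 2(2π−ρ) h e^{u/2} / ∫_{𝕊¹} h e^{u/2} on 𝕊¹, and (2π−ρ)²/ρ = (∫_{𝕊¹} h e^{u/2})² / ∫_{𝔻²} K e^u with 0 < ρ < 2π. Conversely, if (u, ρ) with u ∈ 𝕏 solves this system, then u + C solves the original problem, where C = log ρ − log ∫_{𝔻²} K e^u. -/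
open MeasureTheory Metric Filter Set
open scoped Real NNReal Topology

noncomputable section

/-- `u` belongs to the set `𝕏`: both curvature integrals are positive. -/
def MemX (K h u : ℂ → ℝ) : Prop :=
  0 < (∫ x in Disk, K x * Real.exp (u x)) ∧
    0 < ∫ x in Circ, h x * Real.exp (u x / 2) ∂arcLength

/-- `(u, ρ)` solves the reformulated system (1.4). -/
def SolvesSystem (K h u : ℂ → ℝ) (ρ : ℝ) : Prop :=
  ContDiff ℝ 2 u ∧
  (∀ x ∈ Disk, -laplacian u x =
      2 * ρ * (K x * Real.exp (u x)) / ∫ y in Disk, K y * Real.exp (u y)) ∧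
  (∀ x ∈ Circ, fderiv ℝ u x x + 2 =
      2 * (2 * π - ρ) * (h x * Real.exp (u x / 2)) /
        ∫ y in Circ, h y * Real.exp (u y / 2) ∂arcLength) ∧
  ((2 * π - ρ) ^ 2 / ρ =
      (∫ y in Circ, h y * Real.exp (u y / 2) ∂arcLength) ^ 2 /
        ∫ y in Disk, K y * Real.exp (u y)) ∧
  0 < ρ ∧ ρ < 2 * π

section
open MeasureTheory Metric Filter Set
open scoped Real NNReal Topology ENNReal
namespace PE

def φ (θ : ℝ) : ℂ := Complex.exp (θ * Complex.I)

lemma φ_abs (θ : ℝ) : ‖φ θ‖ = 1 := Complex.norm_exp_ofReal_mul_I θ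

lemma φ_mem_Circ (θ : ℝ) : φ θ ∈ Circ := by
  simp [Circ, mem_sphere_iff_norm, φ_abs]

lemma hasDerivAt_φ (θ : ℝ) : HasDerivAt φ (φ θ * Complex.I) θ := by
  have h1 : HasDerivAt (fun θ : ℝ => (θ : ℂ) * Complex.I) Complex.I θ := by
    simpa using (Complex.ofRealCLM.hasDerivAt (x := θ)).mul_const Complex.I
  exact h1.cexp

lemma lipschitz_φ : LipschitzWith 1 φ := by
  apply lipschitzWith_of_nnnorm_deriv_le (fun θ => (hasDerivAt_φ θ).differentiableAt)
  intro θ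
  have : ‖φ θ * Complex.I‖₊ = 1 := by
    ext; simp [φ_abs]
  rw [(hasDerivAt_φ θ).deriv, this]

lemma φ_add (s t : ℝ) : φ (s + t) = φ s * φ t := by
  simp [φ, ← Complex.exp_add]; ring_nf

lemma φ_inj {s t : ℝ} (h : φ s = φ t) (hst : |s - t| < 2 * π) : s = t := by
  rw [φ, φ, Complex.exp_eq_exp_iff_exists_int] at h
  obtain ⟨n, hn⟩ := h
  have him := congrArg Complex.im hn
  simp [Complex.add_im, Complex.mul_im] at him
  -- him : s = t + n * (2 * π)  (after simp; adjust)
  have hs : s = t + n * (2 * π) := by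
    have := hn
    push_cast at this
    have h2 : (s : ℂ) * Complex.I - t * Complex.I = n * (2 * π * Complex.I) := by
      linear_combination this
    have h3 : ((s - t : ℝ) : ℂ) * Complex.I = ((n * (2 * π) : ℝ) : ℂ) * Complex.I := by
      push_cast; linear_combination h2
    have h4 : ((s - t : ℝ) : ℂ) = ((n * (2 * π) : ℝ) : ℂ) :=
      mul_right_cancel₀ Complex.I_ne_zero h3
    have h5 : s - t = n * (2 * π) := by exact_mod_cast h4
    linarith
  have hn0 : n = 0 := by
    by_contra h0
    have h1 : (1 : ℝ) ≤ |(n : ℝ)| := by exact_mod_cast Int.one_le_abs h0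
    have hd : s - t = n * (2 * π) := by linarith
    have habs : |s - t| = |(n : ℝ)| * (2 * π) := by
      rw [hd, abs_mul, abs_of_pos (by positivity : (0:ℝ) < 2 * π)]
    nlinarith [Real.pi_pos]
  rw [hn0] at hs; push_cast at hs; linarith

end PE

end
section
open MeasureTheory Metric Filter Set PE
open scoped Real NNReal Topology
namespace PE

lemma Circ_eq_image : Circ = φ '' (Ioc (-π) π) := by
  ext z
  constructor
  · intro hz
    have habs : ‖z‖ = 1 := by
      simpa [Circ, mem_sphere_iff_norm] using hz
    refine ⟨Complex.arg z, ⟨Complex.neg_pi_lt_arg z, Complex.arg_le_pi z⟩, ?_⟩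
    have := Complex.norm_mul_exp_arg_mul_I z
    rw [habs] at this
    simpa [φ] using this
  · rintro ⟨θ, _, rfl⟩
    exact φ_mem_Circ θ

lemma arc_eq_diff {a b : ℝ} (hab : a ≤ b) (hb : b - a < 2 * π) :
    φ '' (Ioc a b) = (φ '' (Icc a b)) \ {φ a} := by
  ext z
  constructor
  · rintro ⟨s, hs, rfl⟩
    refine ⟨⟨s, Ioc_subset_Icc_self hs, rfl⟩, ?_⟩
    intro hz
    simp only [mem_singleton_iff] at hz
    have := φ_inj hz (by rw [abs_of_nonneg (by linarith [hs.1.le] : (0:ℝ) ≤ s - a)]; linarith [hs.2])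
    exact absurd this (by linarith [hs.1])
  · rintro ⟨⟨s, hs, rfl⟩, hz⟩
    refine ⟨s, ⟨?_, hs.2⟩, rfl⟩
    rcases eq_or_lt_of_le hs.1 with h | h
    · exfalso; apply hz; rw [← h]; exact rfl
    · exact h

lemma arc_measurable {a b : ℝ} (hab : a ≤ b) (hb : b - a < 2 * π) :
    MeasurableSet (φ '' (Ioc a b)) := by
  rw [arc_eq_diff hab hb]
  have hcont : Continuous φ := lipschitz_φ.continuous
  exact ((isCompact_Icc.image hcont).isClosed.measurableSet).diff (measurableSet_singleton _)

lemma arc_le {a b : ℝ} (hab : a ≤ b) :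
    μH[1] (φ '' (Ioc a b)) ≤ ENNReal.ofReal (b - a) := by
  have := lipschitz_φ.hausdorffMeasure_image_le zero_le_one (Ioc a b)
  rw [MeasureTheory.hausdorffMeasure_real] at this
  simpa [Real.volume_Ioc] using this

lemma rot_isometry (t : ℝ) : Isometry (fun z : ℂ => φ t * z) := by
  apply Isometry.of_dist_eq
  intro x y
  simp only [Complex.dist_eq, ← mul_sub, norm_mul, φ_abs, one_mul]

lemma arc_rot (t a b : ℝ) :
    μH[1] (φ '' (Ioc (a + t) (b + t))) = μH[1] (φ '' (Ioc a b)) := by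
  have himg : φ '' (Ioc (a + t) (b + t)) = (fun z : ℂ => φ t * z) '' (φ '' (Ioc a b)) := by
    rw [image_image]
    have h1 : Ioc (a + t) (b + t) = (fun s => s + t) '' (Ioc a b) := by
      rw [image_add_const_Ioc]
    rw [h1, image_image]
    apply image_congr
    intro s _
    rw [φ_add, mul_comm]
  rw [himg, Isometry.hausdorffMeasure_image (rot_isometry t) (Or.inl zero_le_one)]

lemma lipschitz_im : LipschitzWith 1 Complex.im := by
  apply LipschitzWith.of_dist_le_mul
  intro x y
  push_cast
  rw [one_mul, Real.dist_eq, Complex.dist_eq]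
  simpa using Complex.abs_im_le_norm (x - y)

lemma chord_le {α : ℝ} (h0 : 0 < α) (hα : α ≤ π / 2) :
    ENNReal.ofReal (2 * Real.sin α) ≤ μH[1] (φ '' (Ioc (-α) α)) := by
  have hsub : Ioc (-Real.sin α) (Real.sin α) ⊆ Complex.im '' (φ '' (Ioc (-α) α)) := by
    intro y hy
    have hs1 : Real.sin α ≤ 1 := Real.sin_le_one α
    have hs0 : 0 ≤ Real.sin α := Real.sin_nonneg_of_nonneg_of_le_pi h0.le (by linarith [Real.pi_pos])
    have hy1 : -1 ≤ y := by linarith [hy.1.le]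
    have hy2 : y ≤ 1 := le_trans hy.2 hs1
    refine ⟨φ (Real.arcsin y), ⟨Real.arcsin y, ⟨?_, ?_⟩, rfl⟩, ?_⟩
    · -- -α < arcsin y
      have := Real.strictMonoOn_arcsin (by constructor <;> linarith : -Real.sin α ∈ Icc (-1:ℝ) 1)
        (by constructor <;> linarith : y ∈ Icc (-1:ℝ) 1) hy.1
      rwa [← Real.sin_neg, Real.arcsin_sin (by linarith [Real.pi_pos]) (by linarith)] at this
    · -- arcsin y ≤ α
      calc Real.arcsin y ≤ Real.arcsin (Real.sin α) := Real.monotone_arcsin hy.2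
        _ = α := Real.arcsin_sin (by linarith [Real.pi_pos]) (by linarith)
    · simp [φ, Complex.exp_ofReal_mul_I_im, Real.sin_arcsin hy1 hy2]
  calc ENNReal.ofReal (2 * Real.sin α)
      = μH[1] (Ioc (-Real.sin α) (Real.sin α)) := by
        rw [MeasureTheory.hausdorffMeasure_real, Real.volume_Ioc]; congr 1; ring
    _ ≤ μH[1] (Complex.im '' (φ '' (Ioc (-α) α))) := measure_mono hsub
    _ ≤ 1 * μH[1] (φ '' (Ioc (-α) α)) := by
        have := lipschitz_im.hausdorffMeasure_image_le zero_le_one (φ '' (Ioc (-α) α))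
        simpa using this
    _ = _ := one_mul _

lemma partitionIoc (a d : ℝ) (hd : 0 ≤ d) (n : ℕ) :
    (⋃ k ∈ Finset.range n, Ioc (a + d * k) (a + d * (k + 1))) = Ioc a (a + d * n) := by
  induction n with
  | zero => simp
  | succ n ih =>
    rw [Finset.range_add_one]
    simp only [Finset.mem_insert, iUnion_iUnion_eq_or_left]
    rw [ih, union_comm]
    push_cast
    rw [Ioc_union_Ioc_eq_Ioc (by nlinarith : a ≤ a + d * n) (by nlinarith)]

end PE
end
section
open MeasureTheory Metric Filter Set
open scoped Real NNReal Topology ENNReal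
namespace PE

def arcP (n k : ℕ) : Set ℂ := φ '' Ioc (-π + (2*π/n)*k) (-π + (2*π/n)*(k+1))

def baseArc (n : ℕ) : Set ℂ := φ '' Ioc (-(π/n)) (π/n)

lemma two_le_real {n : ℕ} (hn : 2 ≤ n) : (2:ℝ) ≤ n := by exact_mod_cast hn

lemma circ_eq_arcs {n : ℕ} (hn : 2 ≤ n) :
    Circ = ⋃ k ∈ Finset.range n, arcP n k := by
  have hn0 : (0:ℝ) < n := by positivity
  have hd : (0:ℝ) ≤ 2*π/n := by positivity
  have hend : -π + (2*π/n) * n = π := by field_simp; ring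
  rw [Circ_eq_image]
  have h := partitionIoc (-π) (2*π/n) hd n
  rw [hend] at h
  rw [← h]
  simp only [arcP, image_iUnion]

lemma arcP_subset_Ioc {n : ℕ} (hn : 2 ≤ n) {k : ℕ} (hk : k < n) :
    Ioc (-π + (2*π/n)*(k:ℝ)) (-π + (2*π/n)*((k:ℝ)+1)) ⊆ Ioc (-π) π := by
  have hn0 : (0:ℝ) < n := by positivity
  have hd : (0:ℝ) ≤ 2*π/n := by positivity
  have hk1 : ((k:ℝ)+1) ≤ (n:ℝ) := by exact_mod_cast Nat.succ_le_of_lt hk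
  have h2 : (2*π/n)*(n:ℝ) = 2*π := by field_simp
  apply Ioc_subset_Ioc
  · nlinarith [Nat.cast_nonneg (α := ℝ) k]
  · have h3 : (2*π/n)*((k:ℝ)+1) ≤ (2*π/n)*n := mul_le_mul_of_nonneg_left hk1 hd
    nlinarith

lemma arc_len_lt {n : ℕ} (hn : 2 ≤ n) : 2*π/(n:ℝ) < 2*π := by
  have h2 := two_le_real hn
  have hπ : (0:ℝ) < π := Real.pi_pos
  rw [div_lt_iff₀ (by linarith)]
  nlinarith

lemma arcP_measurable {n : ℕ} (hn : 2 ≤ n) (k : ℕ) : MeasurableSet (arcP n k) := by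
  have hn0 : (0:ℝ) < n := by positivity
  have hd : (0:ℝ) ≤ 2*π/n := by positivity
  have hlen : -π + 2*π/(n:ℝ)*((k:ℝ)+1) - (-π + 2*π/(n:ℝ)*(k:ℝ)) = 2*π/(n:ℝ) := by ring
  apply arc_measurable (by nlinarith) (by rw [hlen]; exact arc_len_lt hn)

lemma arcP_disjoint {n : ℕ} (hn : 2 ≤ n) :
    (↑(Finset.range n) : Set ℕ).PairwiseDisjoint (arcP n) := by
  have hn0 : (0:ℝ) < n := by positivity
  have hd : (0:ℝ) ≤ 2*π/n := by positivity
  intro j hj k hk hjk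
  simp only [Finset.coe_range, mem_Iio] at hj hk
  rw [Function.onFun, disjoint_left]
  rintro z ⟨s, hs, rfl⟩ ⟨t, ht, hφ⟩
  have hsI : s ∈ Ioc (-π) π := arcP_subset_Ioc hn hj hs
  have htI : t ∈ Ioc (-π) π := arcP_subset_Ioc hn hk ht
  have hts : t = s := by
    apply φ_inj hφ
    rw [abs_sub_lt_iff]
    constructor <;> linarith [hsI.1, hsI.2, htI.1, htI.2, Real.pi_pos]
  subst hts
  rcases lt_or_gt_of_ne hjk with h | h
  · have h1 : ((j:ℝ)+1) ≤ (k:ℝ) := by exact_mod_cast Nat.succ_le_of_lt h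
    have := mul_le_mul_of_nonneg_left h1 hd
    linarith [hs.2, ht.1]
  · have h1 : ((k:ℝ)+1) ≤ (j:ℝ) := by exact_mod_cast Nat.succ_le_of_lt h
    have := mul_le_mul_of_nonneg_left h1 hd
    linarith [hs.1, ht.2]

lemma arcP_measure_eq_base {n : ℕ} (k : ℕ) :
    μH[1] (arcP n k) = μH[1] (baseArc n) := by
  have hIoc : Ioc (-π + (2*π/n)*(k:ℝ)) (-π + (2*π/n)*((k:ℝ)+1))
      = Ioc (-(π/n) + (-π + (2*π/n)*(k:ℝ) + π/n)) ((π/n) + (-π + (2*π/n)*(k:ℝ) + π/n)) := by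
    congr 1 <;> ring
  rw [arcP, hIoc, arc_rot]
  rfl

lemma circ_measure_eq_smul {n : ℕ} (hn : 2 ≤ n) :
    μH[1] Circ = (n : ℝ≥0∞) * μH[1] (baseArc n) := by
  rw [circ_eq_arcs hn, measure_biUnion_finset (arcP_disjoint hn) (fun k _ => arcP_measurable hn k)]
  rw [Finset.sum_congr rfl (fun k _ => arcP_measure_eq_base k)]
  rw [Finset.sum_const, Finset.card_range, nsmul_eq_mul]

lemma base_le {n : ℕ} (hn : 2 ≤ n) :
    μH[1] (baseArc n) ≤ ENNReal.ofReal (2*π/n) := by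
  have hn0 : (0:ℝ) < n := by positivity
  have hp : (0:ℝ) < π/n := by positivity
  have h := arc_le (a := -(π/n)) (b := π/n) (by linarith)
  have he : (π/(n:ℝ)) - -(π/n) = 2*π/n := by ring
  rw [he] at h
  exact h

lemma base_ge {n : ℕ} (hn : 2 ≤ n) :
    ENNReal.ofReal (2*Real.sin (π/n)) ≤ μH[1] (baseArc n) := by
  have hn0 : (0:ℝ) < n := by positivity
  have h2 := two_le_real hn
  have hp : (0:ℝ) < π/n := by positivity
  have hle : π/(n:ℝ) ≤ π/2 :=
    div_le_div_of_nonneg_left Real.pi_pos.le (by norm_num) h2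
  exact chord_le hp hle

lemma circ_le : μH[1] Circ ≤ ENNReal.ofReal (2*π) := by
  have h := circ_measure_eq_smul (le_refl 2)
  rw [h]
  calc (2 : ℝ≥0∞) * μH[1] (baseArc 2) ≤ 2 * ENNReal.ofReal (2*π/2) := by
        exact mul_le_mul_right (base_le (le_refl 2)) 2
    _ = ENNReal.ofReal (2*π) := by
        rw [show ((2:ℝ≥0∞)) = ENNReal.ofReal (2:ℝ) by simp, ← ENNReal.ofReal_mul (by norm_num)]
        norm_num

lemma circ_ne_top : μH[1] Circ ≠ ⊤ :=
  fun h => by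
    have := circ_le; rw [h] at this; exact absurd (top_le_iff.1 this) ENNReal.ofReal_ne_top

lemma circ_toReal_ge {n : ℕ} (hn : 2 ≤ n) :
    2*(n:ℝ)*Real.sin (π/n) ≤ (μH[1] Circ).toReal := by
  have hn0 : (0:ℝ) < n := by positivity
  have hsin : 0 ≤ Real.sin (π/n) := by
    apply Real.sin_nonneg_of_nonneg_of_le_pi (by positivity)
    have h2 := two_le_real hn
    rw [div_le_iff₀ hn0]; nlinarith [Real.pi_pos]
  have h := circ_measure_eq_smul hn
  have hlow : ENNReal.ofReal (2*(n:ℝ)*Real.sin (π/n)) ≤ μH[1] Circ := by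
    rw [h, show (2*(n:ℝ)*Real.sin (π/n)) = (n:ℝ) * (2*Real.sin (π/n)) by ring,
      ENNReal.ofReal_mul (by positivity)]
    apply mul_le_mul' _ (base_ge hn)
    simp [ENNReal.ofReal_natCast]
  calc 2*(n:ℝ)*Real.sin (π/n) = (ENNReal.ofReal (2*(n:ℝ)*Real.sin (π/n))).toReal := by
        rw [ENNReal.toReal_ofReal (by positivity)]
    _ ≤ (μH[1] Circ).toReal := ENNReal.toReal_mono circ_ne_top hlow

lemma circ_measure : μH[1] Circ = ENNReal.ofReal (2*π) := by
  have hup : (μH[1] Circ).toReal ≤ 2*π := by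
    have := ENNReal.toReal_mono ENNReal.ofReal_ne_top circ_le
    rwa [ENNReal.toReal_ofReal (by positivity)] at this
  have hlow : 2*π ≤ (μH[1] Circ).toReal := by
    by_contra hc
    push_neg at hc
    set ε := 2*π - (μH[1] Circ).toReal with hε
    have hε0 : 0 < ε := by simp [hε]; linarith
    obtain ⟨n, hnge⟩ := exists_nat_ge (max 4 (π^3/ε))
    have hn4 : (4:ℝ) ≤ n := le_trans (le_max_left _ _) hnge
    have hnπ : π^3/ε ≤ n := le_trans (le_max_right _ _) hnge
    have hn2 : 2 ≤ n := by exact_mod_cast (by linarith : (2:ℝ) ≤ n)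
    have hn0 : (0:ℝ) < n := by linarith
    have hx0 : 0 < π/(n:ℝ) := by positivity
    have hx1 : π/(n:ℝ) ≤ 1 := by
      rw [div_le_one hn0]; linarith [Real.pi_le_four]
    have hsin : π/(n:ℝ) - (π/n)^3/4 < Real.sin (π/n) := by
      have := Real.sin_gt_sub_cube hx0; linarith [pow_pos hx0 3]
    have hkey := circ_toReal_ge hn2
    have hcube : 2*(n:ℝ)*(π/n - (π/n)^3/4) = 2*π - π^3/(2*(n:ℝ)^2) := by
      field_simp; ring
    have h1 : 2*π - π^3/(2*(n:ℝ)^2) < 2*(n:ℝ)*Real.sin (π/n) := by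
      rw [← hcube]
      have := mul_lt_mul_of_pos_left hsin (by positivity : (0:ℝ) < 2*n)
      linarith [this]
    have h2 : π^3/(2*(n:ℝ)^2) ≤ π^3/(2*(n:ℝ)) :=
      div_le_div_of_nonneg_left (by positivity) (by positivity) (by nlinarith)
    have h3 : π^3/(2*(n:ℝ)) ≤ ε/2 := by
      rw [div_le_div_iff₀ (by positivity) (by norm_num)]
      have : π^3 ≤ (n:ℝ) * ε := by
        rw [div_le_iff₀ hε0] at hnπ
        linarith
      nlinarith
    linarith
  have : (μH[1] Circ).toReal = 2*π := le_antisymm hup hlow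
  rw [← ENNReal.ofReal_toReal circ_ne_top, this]

lemma base_measure {n : ℕ} (hn : 2 ≤ n) :
    μH[1] (baseArc n) = ENNReal.ofReal (2*π/n) := by
  have hn0 : (0:ℝ) < n := by positivity
  by_contra hne
  have hlt : μH[1] (baseArc n) < ENNReal.ofReal (2*π/n) :=
    lt_of_le_of_ne (base_le hn) hne
  have := circ_measure_eq_smul hn
  rw [circ_measure] at this
  have hstrict : (n:ℝ≥0∞) * μH[1] (baseArc n) < (n:ℝ≥0∞) * ENNReal.ofReal (2*π/n) := by
    rw [mul_comm (n:ℝ≥0∞), mul_comm (n:ℝ≥0∞)]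
    exact ENNReal.mul_lt_mul_left (by exact_mod_cast (by omega : n ≠ 0)) (by simp) hlt
  rw [← this] at hstrict
  have heq : (n:ℝ≥0∞) * ENNReal.ofReal (2*π/n) = ENNReal.ofReal (2*π) := by
    rw [show ((n:ℝ≥0∞)) = ENNReal.ofReal (n:ℝ) by simp [ENNReal.ofReal_natCast],
      ← ENNReal.ofReal_mul (by positivity)]
    congr 1
    field_simp
  rw [heq] at hstrict
  exact lt_irrefl _ hstrict

lemma arc_measure {n : ℕ} (hn : 2 ≤ n) (a : ℝ) :
    μH[1] (φ '' Ioc a (a + 2*π/n)) = ENNReal.ofReal (2*π/n) := by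
  have hIoc : Ioc a (a + 2*π/(n:ℝ))
      = Ioc (-(π/n) + (a + π/n)) ((π/n) + (a + π/n)) := by
    congr 1 <;> ring
  rw [hIoc, arc_rot, ← base_measure hn]
  rfl

end PE
end
section
open MeasureTheory Metric Filter Set
open scoped Real NNReal Topology ENNReal
namespace PE

lemma measurableSet_Circ : MeasurableSet Circ := isClosed_sphere.measurableSet

lemma integrableOn_circ {f : ℂ → ℝ} (hf : ContinuousOn f Circ) :
    IntegrableOn f Circ μH[1] := by
  obtain ⟨C, hC⟩ := (isCompact_sphere (0:ℂ) 1).exists_bound_of_continuousOn hf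
  apply Integrable.mono' (g := fun _ => C)
    (integrableOn_const circ_ne_top)
    (hf.aestronglyMeasurable measurableSet_Circ)
  exact (ae_restrict_iff' measurableSet_Circ).2 (Eventually.of_forall (fun x hx => hC x hx))

lemma circle_integral_eq {f : ℂ → ℝ} (hf : ContinuousOn f Circ) :
    ∫ x in Circ, f x ∂μH[1] = ∫ θ in Ioc (-π) π, f (φ θ) := by
  have hπ : (0:ℝ) < π := Real.pi_pos
  have hfC := integrableOn_circ hf
  have hfφcont : ContinuousOn (fun θ => f (φ θ)) (Icc (-π) π) :=
    hf.comp lipschitz_φ.continuous.continuousOn (fun θ _ => φ_mem_Circ θ)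
  have hfφint : IntegrableOn (fun θ => f (φ θ)) (Ioc (-π) π) volume :=
    (hfφcont.integrableOn_compact isCompact_Icc).mono_set Ioc_subset_Icc_self
  set L := ∫ x in Circ, f x ∂μH[1] with hL
  set R := ∫ θ in Ioc (-π) π, f (φ θ) with hR
  suffices hsuff : ∀ ε > (0:ℝ), |L - R| ≤ ε * (4*π) by
    by_contra hne
    have h0 : 0 < |L - R| := abs_pos.2 (sub_ne_zero.2 hne)
    have h2 : |L - R| / (8*π) * (4*π) = |L - R| / 2 := by field_simp; ring
    have := hsuff (|L - R| / (8*π)) (by positivity)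
    rw [h2] at this
    linarith
  intro ε hε
  -- uniform continuity of f on the circle
  have huc := (isCompact_sphere (0:ℂ) 1).uniformContinuousOn_of_continuous hf
  rw [Metric.uniformContinuousOn_iff] at huc
  obtain ⟨δ, hδ0, hδ⟩ := huc ε hε
  obtain ⟨n, hnge⟩ := exists_nat_ge (max 2 (2*π/δ + 1))
  have hn2 : 2 ≤ n := by
    have := le_trans (le_max_left 2 (2*π/δ + 1)) hnge
    exact_mod_cast (by exact_mod_cast this : (2:ℝ) ≤ n)
  have hn0 : (0:ℝ) < n := by positivity
  set d := 2*π/(n:ℝ) with hd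
  have hd0 : 0 < d := by positivity
  have hnd : (n:ℝ) * d = 2*π := by rw [hd]; field_simp
  have hdδ : d < δ := by
    have h1 : 2*π/δ + 1 ≤ n := le_trans (le_max_right _ _) hnge
    rw [hd, div_lt_iff₀ hn0]
    rw [div_add' _ _ _ (ne_of_gt hδ0)] at h1
    rw [div_le_iff₀ hδ0] at h1
    nlinarith
  set lo : ℕ → ℝ := fun k => -π + d*k with hlo
  have hhi : ∀ k : ℕ, -π + d*((k:ℝ)+1) = lo k + d := by intro k; simp [hlo]; ring
  set xp : ℕ → ℂ := fun k => φ (lo k + d) with hxp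
  have hxpC : ∀ k, xp k ∈ Circ := fun k => φ_mem_Circ _
  -- pointwise closeness on each arc
  have hclose : ∀ k : ℕ, ∀ s ∈ Ioc (lo k) (lo k + d), |f (φ s) - f (xp k)| ≤ ε := by
    intro k s hs
    have hdist : dist (φ s) (xp k) < δ := by
      have h1 := lipschitz_φ.dist_le_mul s (lo k + d)
      rw [NNReal.coe_one, one_mul] at h1
      have h2 : dist s (lo k + d) < d := by
        rw [Real.dist_eq, abs_sub_lt_iff]
        constructor <;> [linarith [hs.2]; linarith [hs.1]]
      calc dist (φ s) (xp k) ≤ dist s (lo k + d) := h1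
        _ < d := h2
        _ < δ := hdδ
    have := hδ (φ s) (φ_mem_Circ s) (xp k) (hxpC k) hdist
    rw [Real.dist_eq] at this
    exact this.le
  -- bound on circle-side arc integrals
  have harc_meas : ∀ k : ℕ, μH[1] (φ '' Ioc (lo k) (lo k + d)) = ENNReal.ofReal d := by
    intro k; rw [hd]; exact arc_measure hn2 (lo k)
  have harc_bound : ∀ k : ℕ,
      |(∫ x in φ '' Ioc (lo k) (lo k + d), f x ∂μH[1]) - f (xp k) * d| ≤ ε * d := by
    intro k
    have hsub : φ '' Ioc (lo k) (lo k + d) ⊆ Circ := by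
      rintro z ⟨s, _, rfl⟩; exact φ_mem_Circ s
    have hμ : μH[1] (φ '' Ioc (lo k) (lo k + d)) = ENNReal.ofReal d := harc_meas k
    have hμlt : μH[1] (φ '' Ioc (lo k) (lo k + d)) < ⊤ := by rw [hμ]; exact ENNReal.ofReal_lt_top
    have hconst : (∫ _x in φ '' Ioc (lo k) (lo k + d), f (xp k) ∂μH[1]) = f (xp k) * d := by
      rw [setIntegral_const, measureReal_def, hμ, ENNReal.toReal_ofReal hd0.le, smul_eq_mul, mul_comm]
    have hint2 : IntegrableOn (fun x => f x - f (xp k)) (φ '' Ioc (lo k) (lo k + d)) μH[1] :=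
      (hfC.mono_set hsub).sub (integrableOn_const hμlt.ne)
    rw [← hconst, ← integral_sub (hfC.mono_set hsub)
      ((integrableOn_const hμlt.ne))]
    have := norm_setIntegral_le_of_norm_le_const (μ := μH[1]) (f := fun x => f x - f (xp k))
      (s := φ '' Ioc (lo k) (lo k + d)) (C := ε) hμlt ?_
    · rw [Real.norm_eq_abs] at this
      calc |∫ x in φ '' Ioc (lo k) (lo k + d), (f x - f (xp k)) ∂μH[1]|
          ≤ ε * (μH[1] (φ '' Ioc (lo k) (lo k + d))).toReal := this
        _ = ε * d := by rw [hμ, ENNReal.toReal_ofReal hd0.le]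
    · rintro x ⟨s, hs, rfl⟩
      rw [Real.norm_eq_abs]
      exact hclose k s hs
  -- bound on real-side integrals
  have hIoc_bound : ∀ k : ℕ,
      |(∫ θ in Ioc (lo k) (lo k + d), f (φ θ)) - f (xp k) * d| ≤ ε * d := by
    intro k
    have hμ : volume (Ioc (lo k) (lo k + d)) = ENNReal.ofReal d := by
      rw [Real.volume_Ioc]; congr 1; ring
    have hμlt : volume (Ioc (lo k) (lo k + d)) < ⊤ := by rw [hμ]; exact ENNReal.ofReal_lt_top
    have hconst : (∫ _θ in Ioc (lo k) (lo k + d), f (xp k)) = f (xp k) * d := by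
      rw [setIntegral_const, measureReal_def, hμ, ENNReal.toReal_ofReal hd0.le, smul_eq_mul, mul_comm]
    have hint : IntegrableOn (fun θ => f (φ θ)) (Ioc (lo k) (lo k + d)) volume := by
      apply ((hf.comp lipschitz_φ.continuous.continuousOn
        (fun θ _ => φ_mem_Circ θ)).integrableOn_compact isCompact_Icc).mono_set
        Ioc_subset_Icc_self
    have hint2 : IntegrableOn (fun θ => f (φ θ) - f (xp k)) (Ioc (lo k) (lo k + d)) volume :=
      hint.sub (integrableOn_const hμlt.ne)
    rw [← hconst, ← integral_sub hint (integrableOn_const hμlt.ne)]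
    have := norm_setIntegral_le_of_norm_le_const (μ := volume) (f := fun θ => f (φ θ) - f (xp k))
      (s := Ioc (lo k) (lo k + d)) (C := ε) hμlt ?_
    · rw [Real.norm_eq_abs] at this
      calc |∫ θ in Ioc (lo k) (lo k + d), (f (φ θ) - f (xp k))|
          ≤ ε * (volume (Ioc (lo k) (lo k + d))).toReal := this
        _ = ε * d := by rw [hμ, ENNReal.toReal_ofReal hd0.le]
    · intro s hs
      rw [Real.norm_eq_abs]
      exact hclose k s hs
  -- decompose L
  have hLd : L = ∑ k ∈ Finset.range n, ∫ x in φ '' Ioc (lo k) (lo k + d), f x ∂μH[1] := by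
    rw [hL, circ_eq_arcs hn2, integral_biUnion_finset _ (fun k _ => arcP_measurable hn2 k)
      (arcP_disjoint hn2) (fun k _ => hfC.mono_set
        (fun z hz => by obtain ⟨s, -, rfl⟩ := hz; exact φ_mem_Circ s))]
    apply Finset.sum_congr rfl
    intro k _
    congr 1
    rw [arcP]
    congr 1
    rw [hhi k]
  -- decompose R
  have hRd : R = ∑ k ∈ Finset.range n, ∫ θ in Ioc (lo k) (lo k + d), f (φ θ) := by
    have hpart := partitionIoc (-π) d hd0.le n
    have hend : -π + d * (n:ℝ) = π := by rw [mul_comm]; linarith [hnd]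
    rw [hend] at hpart
    have hmeas : ∀ k ∈ Finset.range n,
        MeasurableSet (Ioc (lo k) (lo k + d)) := fun k _ => measurableSet_Ioc
    have hdisj : (↑(Finset.range n) : Set ℕ).Pairwise
        (Function.onFun Disjoint (fun k => Ioc (lo k) (lo k + d))) := by
      intro j _ k _ hjk
      rw [Function.onFun, Set.Ioc_disjoint_Ioc]
      rcases lt_or_gt_of_ne hjk with h | h
      · have h1 : ((j:ℝ)+1) ≤ (k:ℝ) := by exact_mod_cast Nat.succ_le_of_lt h
        have h2 : lo j + d ≤ lo k := by
          simp only [hlo]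
          have := mul_le_mul_of_nonneg_left h1 hd0.le
          nlinarith
        exact le_trans (min_le_left _ _) (le_trans h2 (le_max_right _ _))
      · have h1 : ((k:ℝ)+1) ≤ (j:ℝ) := by exact_mod_cast Nat.succ_le_of_lt h
        have h2 : lo k + d ≤ lo j := by
          simp only [hlo]
          have := mul_le_mul_of_nonneg_left h1 hd0.le
          nlinarith
        exact le_trans (min_le_right _ _) (le_trans h2 (le_max_left _ _))
    have hintk : ∀ k ∈ Finset.range n,
        IntegrableOn (fun θ => f (φ θ)) (Ioc (lo k) (lo k + d)) volume := by
      intro k _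
      apply ((hf.comp lipschitz_φ.continuous.continuousOn
        (fun θ _ => φ_mem_Circ θ)).integrableOn_compact isCompact_Icc).mono_set
        Ioc_subset_Icc_self
    have hunion : Ioc (-π) π = ⋃ k ∈ Finset.range n, Ioc (lo k) (lo k + d) := by
      rw [← hpart]
      apply iUnion₂_congr
      intro k _
      rw [hhi k]
    rw [hR, hunion, integral_biUnion_finset _ hmeas hdisj hintk]
  -- combine
  rw [hLd, hRd, ← Finset.sum_sub_distrib]
  calc |∑ k ∈ Finset.range n, ((∫ x in φ '' Ioc (lo k) (lo k + d), f x ∂μH[1])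
        - ∫ θ in Ioc (lo k) (lo k + d), f (φ θ))|
      ≤ ∑ k ∈ Finset.range n, |(∫ x in φ '' Ioc (lo k) (lo k + d), f x ∂μH[1])
        - ∫ θ in Ioc (lo k) (lo k + d), f (φ θ)| := Finset.abs_sum_le_sum_abs _ _
    _ ≤ ∑ _k ∈ Finset.range n, (2 * (ε * d)) := by
        apply Finset.sum_le_sum
        intro k _
        have h1 := harc_bound k
        have h2 := hIoc_bound k
        calc |(∫ x in φ '' Ioc (lo k) (lo k + d), f x ∂μH[1])
              - ∫ θ in Ioc (lo k) (lo k + d), f (φ θ)|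
            = |((∫ x in φ '' Ioc (lo k) (lo k + d), f x ∂μH[1]) - f (xp k) * d)
              - ((∫ θ in Ioc (lo k) (lo k + d), f (φ θ)) - f (xp k) * d)| := by ring_nf
          _ ≤ _ := by
              rw [sub_eq_add_neg]
              refine (abs_add_le _ _).trans ?_
              rw [abs_neg]
              linarith
    _ = ε * (4*π) := by
        rw [Finset.sum_const, Finset.card_range, nsmul_eq_mul]
        nlinarith [hnd]
  
end PE
end
section
open MeasureTheory Metric Filter Set
open scoped Real NNReal Topology ENNReal
namespace PE

variable {u : ℂ → ℝ}

lemma contdiff_u' (hu : ContDiff ℝ 2 u) : ContDiff ℝ 1 (fderiv ℝ u) :=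
  hu.fderiv_right (by norm_num)

lemma cont_u' (hu : ContDiff ℝ 2 u) : Continuous (fderiv ℝ u) :=
  (contdiff_u' hu).continuous

lemma cont_u'' (hu : ContDiff ℝ 2 u) : Continuous (fderiv ℝ (fderiv ℝ u)) :=
  (contdiff_u' hu).continuous_fderiv (by norm_num)

lemma diff_u (hu : ContDiff ℝ 2 u) : Differentiable ℝ u := hu.differentiable (by norm_num)

lemma diff_u' (hu : ContDiff ℝ 2 u) : Differentiable ℝ (fderiv ℝ u) :=
  (contdiff_u' hu).differentiable (by norm_num)

lemma sndDeriv (hu : ContDiff ℝ 2 u) (x v w : ℂ) :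
    fderiv ℝ (fun y => fderiv ℝ u y v) x w = fderiv ℝ (fderiv ℝ u) x w v := by
  have h := ((diff_u' hu x).hasFDerivAt).clm_apply (hasFDerivAt_const v x)
  rw [h.fderiv]
  simp

lemma lap_eq (hu : ContDiff ℝ 2 u) (x : ℂ) :
    laplacian u x = fderiv ℝ (fderiv ℝ u) x 1 1
      + fderiv ℝ (fderiv ℝ u) x Complex.I Complex.I := by
  rw [laplacian, sndDeriv hu x 1 1, sndDeriv hu x Complex.I Complex.I]

lemma φ_coord (θ : ℝ) : φ θ = (Real.cos θ : ℂ) + (Real.sin θ : ℂ) * Complex.I := by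
  rw [φ, Complex.exp_mul_I, Complex.ofReal_cos, Complex.ofReal_sin]

lemma lap_basis (N : ℂ →L[ℝ] ℂ →L[ℝ] ℝ) (θ : ℝ) :
    N (φ θ) (φ θ) + N (φ θ * Complex.I) (φ θ * Complex.I)
      = N 1 1 + N Complex.I Complex.I := by
  have hφ : φ θ = Real.cos θ • (1:ℂ) + Real.sin θ • Complex.I := by
    rw [φ_coord]; simp [Complex.real_smul]
  have hφI : φ θ * Complex.I = (-Real.sin θ) • (1:ℂ) + Real.cos θ • Complex.I := by
    rw [φ_coord]; simp [Complex.real_smul]; ring_nf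
    rw [Complex.I_sq]; push_cast; ring
  rw [hφI, hφ]
  simp only [map_add, _root_.map_smul, ContinuousLinearMap.add_apply,
    ContinuousLinearMap.coe_smul', Pi.smul_apply, smul_eq_mul]
  have hcs : Real.cos θ ^ 2 + Real.sin θ ^ 2 = 1 := Real.cos_sq_add_sin_sq θ
  linear_combination ((N 1) 1 + (N Complex.I) Complex.I) * hcs

end PE
end
section
open MeasureTheory Metric Filter Set
open scoped Real NNReal Topology ENNReal
namespace PE

variable {u : ℂ → ℝ}

def F1 (u : ℂ → ℝ) (p : ℝ × ℝ) : ℝ :=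
  fderiv ℝ u (p.1 • φ p.2) (φ p.2)
    + p.1 * fderiv ℝ (fderiv ℝ u) (p.1 • φ p.2) (φ p.2) (φ p.2)

def F2 (u : ℂ → ℝ) (p : ℝ × ℝ) : ℝ :=
  p.1 * fderiv ℝ (fderiv ℝ u) (p.1 • φ p.2) (φ p.2 * Complex.I) (φ p.2 * Complex.I)
    - fderiv ℝ u (p.1 • φ p.2) (φ p.2)

lemma hasDerivAt_radial (hu : ContDiff ℝ 2 u) (θ : ℝ) (r : ℝ) :
    HasDerivAt (fun r : ℝ => r * fderiv ℝ u (r • φ θ) (φ θ)) (F1 u (r, θ)) r := by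
  set w := φ θ
  have hc : HasDerivAt (fun r : ℝ => r • w) ((1:ℝ) • w) r := (hasDerivAt_id r).smul_const w
  have hψ : HasDerivAt (fun r : ℝ => fderiv ℝ u (r • w))
      (fderiv ℝ (fderiv ℝ u) (r • w) ((1:ℝ) • w)) r :=
    ((diff_u' hu (r • w)).hasFDerivAt).comp_hasDerivAt r hc
  have heval := hψ.clm_apply (hasDerivAt_const r w)
  have heval' : HasDerivAt (fun r : ℝ => fderiv ℝ u (r • w) w)
      (fderiv ℝ (fderiv ℝ u) (r • w) w w) r := by
    simpa using heval
  have h := (hasDerivAt_id r).mul heval'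
  simp only [F1, one_mul, id_eq] at h ⊢
  exact h

lemma hasDerivAt_angular (hu : ContDiff ℝ 2 u) (r θ : ℝ) :
    HasDerivAt (fun θ : ℝ => fderiv ℝ u (r • φ θ) (r • (φ θ * Complex.I)))
      (r * (r * fderiv ℝ (fderiv ℝ u) (r • φ θ) (φ θ * Complex.I) (φ θ * Complex.I))
        - r * fderiv ℝ u (r • φ θ) (φ θ)) θ := by
  have hφ' := hasDerivAt_φ θ
  have hγ : HasDerivAt (fun θ : ℝ => r • φ θ) (r • (φ θ * Complex.I)) θ := hφ'.const_smul r
  have hc : HasDerivAt (fun θ : ℝ => fderiv ℝ u (r • φ θ))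
      (fderiv ℝ (fderiv ℝ u) (r • φ θ) (r • (φ θ * Complex.I))) θ :=
    ((diff_u' hu _).hasFDerivAt).comp_hasDerivAt θ hγ
  have hv : HasDerivAt (fun θ : ℝ => r • (φ θ * Complex.I))
      (r • (φ θ * Complex.I * Complex.I)) θ := (hφ'.mul_const Complex.I).const_smul r
  have h := hc.clm_apply hv
  have hII : φ θ * Complex.I * Complex.I = -φ θ := by
    rw [mul_assoc, Complex.I_mul_I]; ring
  rw [hII] at h
  refine h.congr_deriv ?_
  simp only [_root_.map_smul, map_neg, smul_neg, ContinuousLinearMap.coe_smul',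
    ContinuousLinearMap.neg_apply, Pi.smul_apply, Pi.neg_apply, smul_eq_mul]
  ring

lemma cont_X : Continuous (fun p : ℝ × ℝ => p.1 • φ p.2) :=
  continuous_fst.smul (lipschitz_φ.continuous.comp continuous_snd)

lemma cont_φ2 : Continuous (fun p : ℝ × ℝ => φ p.2) :=
  lipschitz_φ.continuous.comp continuous_snd

lemma cont_F1 (hu : ContDiff ℝ 2 u) : Continuous (F1 u) := by
  apply Continuous.add
  · exact ((cont_u' hu).comp cont_X).clm_apply cont_φ2
  · exact continuous_fst.mul
      ((((cont_u'' hu).comp cont_X).clm_apply cont_φ2).clm_apply cont_φ2)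

lemma cont_F2 (hu : ContDiff ℝ 2 u) : Continuous (F2 u) := by
  have hφI : Continuous (fun p : ℝ × ℝ => φ p.2 * Complex.I) := cont_φ2.mul continuous_const
  apply Continuous.sub
  · exact continuous_fst.mul
      ((((cont_u'' hu).comp cont_X).clm_apply hφI).clm_apply hφI)
  · exact ((cont_u' hu).comp cont_X).clm_apply cont_φ2

lemma φ_pi_eq : φ π = φ (-π) := by
  rw [φ, φ]
  push_cast
  rw [neg_mul, Complex.exp_neg, Complex.exp_pi_mul_I]
  norm_num

lemma divergence (hu : ContDiff ℝ 2 u) :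
    (∫ x in Disk, laplacian u x) = ∫ θ in Ioc (-π) π, fderiv ℝ u (φ θ) (φ θ) := by
  have hπ : (0:ℝ) < π := Real.pi_pos
  set S : Set (ℝ × ℝ) := Ioc (0:ℝ) 1 ×ˢ Ioo (-π) π with hS
  have hSmeas : MeasurableSet S := measurableSet_Ioc.prod measurableSet_Ioo
  have hsymm : ∀ p : ℝ × ℝ, Complex.polarCoord.symm p = p.1 • φ p.2 := by
    intro p
    rw [Complex.polarCoord_symm_apply, φ_coord, Complex.real_smul]
  have hnormX : ∀ p : ℝ × ℝ, ‖p.1 • φ p.2‖ = |p.1| := by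
    intro p
    rw [norm_smul, Real.norm_eq_abs, φ_abs, mul_one]
  have hDiskMeas : MeasurableSet Disk := measurableSet_closedBall
  have hSsub' : S ⊆ polarCoord.target := by
    rw [polarCoord_target]
    exact prod_mono Ioc_subset_Ioi_self subset_rfl
  -- Step A: polar change of variables
  have hA : (∫ x in Disk, laplacian u x)
      = ∫ p in polarCoord.target, p.1 • (Disk.indicator (laplacian u)) (Complex.polarCoord.symm p) := by
    rw [← integral_indicator hDiskMeas, ← Complex.integral_comp_polarCoord_symm]
  -- Step B: reduce to S
  have hB : (∫ p in polarCoord.target, p.1 • (Disk.indicator (laplacian u)) (Complex.polarCoord.symm p))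
      = ∫ p in S, p.1 * laplacian u (p.1 • φ p.2) := by
    have h1 : (∫ p in polarCoord.target, p.1 • (Disk.indicator (laplacian u)) (Complex.polarCoord.symm p))
        = ∫ p in polarCoord.target,
            S.indicator (fun p : ℝ × ℝ => p.1 * laplacian u (p.1 • φ p.2)) p := by
      apply setIntegral_congr_fun polarCoord.open_target.measurableSet
      intro p hp
      rw [polarCoord_target] at hp
      have hp1 : 0 < p.1 := hp.1
      have hmem : (p.1 • φ p.2) ∈ Disk ↔ p.1 ≤ 1 := by
        rw [Disk, mem_closedBall_zero_iff, hnormX p, abs_of_pos hp1]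
      simp only [hsymm]
      by_cases hle : p.1 ≤ 1
      · have hpS : p ∈ S := ⟨⟨hp1, hle⟩, hp.2⟩
        rw [indicator_of_mem hpS, indicator_of_mem (hmem.2 hle), smul_eq_mul]
      · have hpS : p ∉ S := fun h => hle h.1.2
        rw [indicator_of_notMem hpS, indicator_of_notMem (fun h => hle (hmem.1 h)),
          smul_zero]
    rw [h1, setIntegral_indicator hSmeas, inter_eq_self_of_subset_right hSsub']
  -- decomposition of the integrand
  have hdecomp : ∀ p : ℝ × ℝ, p.1 * laplacian u (p.1 • φ p.2) = F1 u p + F2 u p := by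
    intro p
    rw [lap_eq hu, ← lap_basis (fderiv ℝ (fderiv ℝ u) (p.1 • φ p.2)) p.2, F1, F2]
    ring
  -- integrability on S
  have hKcomp : IsCompact (Icc (0:ℝ) 1 ×ˢ Icc (-π) π) := isCompact_Icc.prod isCompact_Icc
  have hSsub : S ⊆ Icc (0:ℝ) 1 ×ˢ Icc (-π) π :=
    prod_mono Ioc_subset_Icc_self Ioo_subset_Icc_self
  have hInt1 : IntegrableOn (F1 u) S volume :=
    (((cont_F1 hu).continuousOn).integrableOn_compact hKcomp).mono_set hSsub
  have hInt2 : IntegrableOn (F2 u) S volume :=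
    (((cont_F2 hu).continuousOn).integrableOn_compact hKcomp).mono_set hSsub
  -- split the integral
  have hC : (∫ p in S, p.1 * laplacian u (p.1 • φ p.2))
      = (∫ p in S, F1 u p) + ∫ p in S, F2 u p := by
    rw [← integral_add hInt1 hInt2]
    simp only [hdecomp]
  -- F1 part
  have hF1 : (∫ p in S, F1 u p) = ∫ θ in Ioc (-π) π, fderiv ℝ u (φ θ) (φ θ) := by
    have hInt1' := hInt1
    rw [IntegrableOn, Measure.volume_eq_prod, ← Measure.prod_restrict] at hInt1'
    rw [hS, Measure.volume_eq_prod, ← Measure.prod_restrict, integral_prod_symm _ hInt1']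
    have hinner : ∀ θ : ℝ, (∫ r in Ioc (0:ℝ) 1, F1 u (r, θ)) = fderiv ℝ u (φ θ) (φ θ) := by
      intro θ
      rw [← intervalIntegral.integral_of_le zero_le_one]
      rw [intervalIntegral.integral_eq_sub_of_hasDerivAt
        (f := fun r : ℝ => r * fderiv ℝ u (r • φ θ) (φ θ))
        (fun x _ => hasDerivAt_radial hu θ x)
        (((cont_F1 hu).comp (continuous_id.prodMk continuous_const)).intervalIntegrable 0 1)]
      simp
    calc ∫ θ in Ioo (-π) π, ∫ r in Ioc (0:ℝ) 1, F1 u (r, θ)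
        = ∫ θ in Ioo (-π) π, fderiv ℝ u (φ θ) (φ θ) := by
          apply setIntegral_congr_fun measurableSet_Ioo
          intro θ _
          exact hinner θ
      _ = ∫ θ in Ioc (-π) π, fderiv ℝ u (φ θ) (φ θ) := integral_Ioc_eq_integral_Ioo.symm
  -- F2 part
  have hF2 : (∫ p in S, F2 u p) = 0 := by
    have hInt2' := hInt2
    rw [IntegrableOn, Measure.volume_eq_prod, ← Measure.prod_restrict] at hInt2'
    rw [hS, Measure.volume_eq_prod, ← Measure.prod_restrict, integral_prod _ hInt2']
    have hinner : ∀ r ∈ Ioc (0:ℝ) 1, (∫ θ in Ioo (-π) π, F2 u (r, θ)) = 0 := by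
      intro r hr
      have hr0 : r ≠ 0 := ne_of_gt hr.1
      have hder : ∀ θ ∈ uIcc (-π) π,
          HasDerivAt (fun θ : ℝ => r⁻¹ * fderiv ℝ u (r • φ θ) (r • (φ θ * Complex.I)))
            (F2 u (r, θ)) θ := by
        intro θ _
        have h := (hasDerivAt_angular hu r θ).const_mul r⁻¹
        refine h.congr_deriv ?_
        rw [F2]
        field_simp
      rw [← integral_Ioc_eq_integral_Ioo,
        ← intervalIntegral.integral_of_le (by linarith : -π ≤ π),
        intervalIntegral.integral_eq_sub_of_hasDerivAt hder
          (((cont_F2 hu).comp (continuous_const.prodMk continuous_id)).intervalIntegrable _ _)]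
      rw [φ_pi_eq]
      ring
    calc ∫ r in Ioc (0:ℝ) 1, ∫ θ in Ioo (-π) π, F2 u (r, θ)
        = ∫ r in Ioc (0:ℝ) 1, (0:ℝ) := by
          apply setIntegral_congr_fun measurableSet_Ioc
          intro r hr
          exact hinner r hr
      _ = 0 := by simp
  rw [hA, hB, hC, hF1, hF2, add_zero]

end PE
end
section
open MeasureTheory Metric Filter Set
open scoped Real NNReal Topology ENNReal
namespace PE

variable {u : ℂ → ℝ}

lemma lap_add_const (u : ℂ → ℝ) (c : ℝ) : laplacian (fun x => u x + c) = laplacian u := by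
  have hf : fderiv ℝ (fun x => u x + c) = fderiv ℝ u := by
    funext y
    exact fderiv_add_const c
  unfold laplacian
  funext x
  simp only [hf]

lemma fderiv_add_const' (u : ℂ → ℝ) (c : ℝ) (x : ℂ) :
    fderiv ℝ (fun x => u x + c) x = fderiv ℝ u x := fderiv_add_const c

/-- Green/divergence identity: for a solution of the PDE system,
the boundary integral equals `2π` minus the interior integral. -/
lemma boundary_integral (hu : ContDiff ℝ 2 u) (K h : ℂ → ℝ)
    (hd : ∀ x ∈ Disk, -laplacian u x = 2 * K x * Real.exp (u x))
    (hb : ∀ x ∈ Circ, fderiv ℝ u x x + 2 = 2 * h x * Real.exp (u x / 2)) :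
    (∫ x in Circ, h x * Real.exp (u x / 2) ∂μH[1])
      = 2*π - ∫ x in Disk, K x * Real.exp (u x) := by
  have hπ : (0:ℝ) < π := Real.pi_pos
  -- interior identity
  have hint : (∫ x in Disk, laplacian u x) = -(2 * ∫ x in Disk, K x * Real.exp (u x)) := by
    have h1 : (∫ x in Disk, -laplacian u x) = ∫ x in Disk, 2 * (K x * Real.exp (u x)) := by
      apply setIntegral_congr_fun (measurableSet_closedBall : MeasurableSet Disk)
      intro x hx
      dsimp only
      rw [hd x hx]
      ring
    rw [integral_neg, integral_const_mul] at h1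
    linarith
  -- continuity of the normal derivative
  have hfd_cont : Continuous (fun x : ℂ => fderiv ℝ u x x) :=
    (cont_u' hu).clm_apply continuous_id
  have hfd_int : IntegrableOn (fun x : ℂ => fderiv ℝ u x x) Circ μH[1] :=
    integrableOn_circ hfd_cont.continuousOn
  have hconst_int : IntegrableOn (fun _ : ℂ => (2:ℝ)) Circ μH[1] :=
    integrableOn_const circ_ne_top
  -- boundary identity
  have h2 : (∫ x in Circ, (fderiv ℝ u x x + 2) ∂μH[1])
      = ∫ x in Circ, 2 * (h x * Real.exp (u x / 2)) ∂μH[1] := by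
    apply setIntegral_congr_fun measurableSet_Circ
    intro x hx
    dsimp only
    rw [hb x hx]
    ring
  rw [integral_add hfd_int hconst_int, integral_const_mul, setIntegral_const] at h2
  have h3 : (∫ x in Circ, fderiv ℝ u x x ∂μH[1])
      = ∫ x in Disk, laplacian u x := by
    rw [circle_integral_eq hfd_cont.continuousOn, divergence hu]
  have h4 : (μH[1] : Measure ℂ).real Circ • (2:ℝ) = 4 * π := by
    rw [measureReal_def, circ_measure, ENNReal.toReal_ofReal (by positivity), smul_eq_mul]
    ring
  rw [h3, hint, h4] at h2
  linarith

end PE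
end

/-- **Lemma 2.2.** Problems (1.3) and (1.4) are equivalent: a function `u ∈ 𝕏` solves the
original problem iff `(u, ρ)` with `ρ = ∫_{𝔻²} K e^u` solves the system; conversely, if
`(u, ρ)` with `u ∈ 𝕏` solves the system, then `u + C` with
`C = log ρ − log ∫_{𝔻²} K e^u` solves the original problem. -/
theorem problems_equivalent
    (K h : ℂ → ℝ) (hK : ContinuousOn K Disk) (hh : ContinuousOn h Circ) :
    (∀ u : ℂ → ℝ, MemX K h u →
        (SolvesPrescribed K h u ↔
          SolvesSystem K h u (∫ x in Disk, K x * Real.exp (u x)))) ∧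
    (∀ (u : ℂ → ℝ) (ρ : ℝ), MemX K h u → SolvesSystem K h u ρ →
        SolvesPrescribed K h
          (fun x => u x +
            (Real.log ρ - Real.log (∫ y in Disk, K y * Real.exp (u y))))) := by
  have hπ : (0:ℝ) < π := Real.pi_pos
  have harc : arcLength = μH[1] := rfl
  constructor
  · -- Part 1: equivalence of the two formulations
    intro u hmem
    obtain ⟨hA, hB⟩ := hmem
    constructor
    · rintro ⟨hu, hd, hb⟩
      have hBval : (∫ x in Circ, h x * Real.exp (u x / 2) ∂arcLength)
          = 2*π - ∫ x in Disk, K x * Real.exp (u x) := by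
        rw [harc]
        exact PE.boundary_integral hu K h hd hb
      refine ⟨hu, fun x hx => ?_, fun x hx => ?_, ?_, hA, by linarith⟩
      · rw [hd x hx]
        set A := ∫ x in Disk, K x * Real.exp (u x) with hAdef
        field_simp
      · rw [hb x hx, hBval]
        set A := ∫ x in Disk, K x * Real.exp (u x) with hAdef
        have hApos : (0:ℝ) < 2*π - A := by
          rw [hBval] at hB; exact hB
        field_simp
      · rw [hBval]
    · rintro ⟨hu, hd, hb, hcon, hρ0, hρπ⟩
      have hBeq : 2*π - (∫ x in Disk, K x * Real.exp (u x))
          = ∫ x in Circ, h x * Real.exp (u x / 2) ∂arcLength := by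
        set A := ∫ x in Disk, K x * Real.exp (u x) with hAdef
        set B := ∫ x in Circ, h x * Real.exp (u x / 2) ∂arcLength with hBdef
        have h3 : (2*π - A)^2 = B^2 := by
          field_simp at hcon
          linarith [hcon]
        have h1 : (2*π - A - B) * (2*π - A + B) = 0 := by linear_combination h3
        rcases mul_eq_zero.1 h1 with hz | hz
        · linarith
        · linarith
      refine ⟨hu, fun x hx => ?_, fun x hx => ?_⟩
      · rw [hd x hx]
        set A := ∫ x in Disk, K x * Real.exp (u x) with hAdef
        field_simp
      · rw [hb x hx, ← hBeq]
        set A := ∫ x in Disk, K x * Real.exp (u x) with hAdef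
        have hApos : (0:ℝ) < 2*π - A := by
          rw [hBeq]; exact hB
        field_simp
  · -- Part 2: converse with an additive shift
    intro u ρ hmem hsys
    obtain ⟨hA, hB⟩ := hmem
    obtain ⟨hu, hd, hb, hcon, hρ0, hρπ⟩ := hsys
    have hexpC : Real.exp (Real.log ρ - Real.log (∫ y in Disk, K y * Real.exp (u y)))
        = ρ / ∫ y in Disk, K y * Real.exp (u y) := by
      rw [Real.exp_sub, Real.exp_log hρ0, Real.exp_log hA]
    have hratio : (2*π - ρ) / (∫ y in Circ, h y * Real.exp (u y / 2) ∂arcLength)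
        = Real.exp ((Real.log ρ - Real.log (∫ y in Disk, K y * Real.exp (u y))) / 2) := by
      set A := ∫ y in Disk, K y * Real.exp (u y) with hAdef
      set B := ∫ y in Circ, h y * Real.exp (u y / 2) ∂arcLength with hBdef
      set C := Real.log ρ - Real.log A with hCdef
      have he : Real.exp (C/2) ^ 2 = Real.exp C := by
        rw [sq, ← Real.exp_add]
        congr 1
        ring
      have hsq : ((2*π - ρ)/B)^2 = (Real.exp (C/2))^2 := by
        rw [he, hexpC]
        rw [div_pow, div_eq_div_iff (by positivity) (ne_of_gt hA)]
        field_simp at hcon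
        linarith [hcon]
      have h1 : ((2*π - ρ)/B - Real.exp (C/2)) * ((2*π - ρ)/B + Real.exp (C/2)) = 0 := by
        linear_combination hsq
      rcases mul_eq_zero.1 h1 with hz | hz
      · linarith
      · exfalso
        have hp1 : 0 < (2*π - ρ)/B := div_pos (by linarith) hB
        have hp2 : 0 < Real.exp (C/2) := Real.exp_pos _
        linarith
    refine ⟨hu.add contDiff_const, fun x hx => ?_, fun x hx => ?_⟩
    · rw [PE.lap_add_const u _, hd x hx]
      show 2 * ρ * (K x * Real.exp (u x)) / (∫ y in Disk, K y * Real.exp (u y))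
          = 2 * K x * Real.exp (u x + (Real.log ρ - Real.log (∫ y in Disk, K y * Real.exp (u y))))
      rw [Real.exp_add, hexpC]
      set A := ∫ y in Disk, K y * Real.exp (u y) with hAdef
      field_simp
    · rw [PE.fderiv_add_const' u _ x, hb x hx]
      show 2 * (2*π - ρ) * (h x * Real.exp (u x / 2))
            / (∫ y in Circ, h y * Real.exp (u y / 2) ∂arcLength)
          = 2 * h x * Real.exp ((u x + (Real.log ρ - Real.log (∫ y in Disk, K y * Real.exp (u y)))) / 2)
      have hsplit : Real.exp ((u x + (Real.log ρ - Real.log (∫ y in Disk, K y * Real.exp (u y)))) / 2)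
          = Real.exp (u x / 2)
            * Real.exp ((Real.log ρ - Real.log (∫ y in Disk, K y * Real.exp (u y))) / 2) := by
        rw [← Real.exp_add]
        congr 1
        ring
      rw [hsplit, ← hratio]
      set B := ∫ y in Circ, h y * Real.exp (u y / 2) ∂arcLength with hBdef
      field_simp
end
end
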